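/- For $\alpha > -1/2$ and $T > 0$, the inner product of the $i$-th normalized shifted Legendre polynomial $\hat P(i,\cdot)$ with the power function $t \mapsto t^\alpha$ over $[0,T]$ equals $T^\alpha\sqrt{T}\,\frac{\sqrt{2i+1}\,\alpha(\alpha-1)\cdots(\alpha-i+1)}{(\alpha+1)(\alpha+2)\cdots(\alpha+i+1)}$. -/

import Mathlib

open Real

/-- Standardized Legendre polynomial on `[-1,1]` via the Rodrigues formula. -/
noncomputable def legendreP (i : ℕ) (x : ℝ) : ℝ :=
  (1 / (2 ^ i * (Nat.factorial i))) * iteratedDeriv i (fun y : ℝ => (y ^ 2 - 1) ^ i) x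

/-- Normalized shifted Legendre polynomial on `[0,T]`. -/
noncomputable def legendreHat (T : ℝ) (i : ℕ) (t : ℝ) : ℝ :=
  Real.sqrt ((2 * i + 1) / T) * legendreP i (2 * t / T - 1)

open Polynomial Finset


lemma iteratedDeriv_polyeval (p : ℝ[X]) (n : ℕ) :
    iteratedDeriv n (fun x : ℝ => p.eval x) = fun x => (derivative^[n] p).eval x := by
  induction n with
  | zero => simp
  | succ n ih =>
    rw [iteratedDeriv_succ, ih, Function.iterate_succ_apply']
    funext x
    exact Polynomial.deriv (p := derivative^[n] p)

lemma partial_fraction : ∀ (n : ℕ) (x : ℝ), 0 < x →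
    ∑ j ∈ range (n+1), (-1:ℝ)^j * (n.choose j) / (x + j)
      = (n.factorial : ℝ) / ∏ m ∈ range (n+1), (x + m) := by
  intro n
  induction n with
  | zero => intro x hx; simp
  | succ n ih =>
    intro x hx
    have hg : ∀ y : ℝ, 0 < y → (∏ m ∈ range (n+1), (y + m)) ≠ 0 := by
      intro y hy
      apply ne_of_gt
      apply Finset.prod_pos
      intro k _
      positivity
    set S : ℝ → ℝ := fun y => ∑ j ∈ range (n+1), (-1:ℝ)^j * (n.choose j) / (y + j) with hS
    have key : ∑ j ∈ range (n+2), (-1:ℝ)^j * ((n+1).choose j) / (x + j) = S x - S (x+1) := by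
      have hB : S x = -(∑ j ∈ range (n+1), (-1:ℝ)^j * (n.choose (j+1)) / (x + ((j:ℝ)+1))) + 1/x := by
        have h1 : S x = ∑ j ∈ range (n+2), (-1:ℝ)^j * (n.choose j) / (x + j) := by
          rw [hS]
          simp only []
          rw [Finset.sum_range_succ (n := n+1)]
          simp [Nat.choose_eq_zero_of_lt (Nat.lt_succ_self n)]
        rw [h1, Finset.sum_range_succ']
        push_cast
        have hterm : ∀ j ∈ range (n+1), (-1:ℝ)^(j+1) * (n.choose (j+1)) / (x + ((j:ℝ)+1))
            = -((-1:ℝ)^j * (n.choose (j+1)) / (x + ((j:ℝ)+1))) := by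
          intro j _; ring
        rw [Finset.sum_congr rfl hterm, Finset.sum_neg_distrib]
        simp
      rw [Finset.sum_range_succ']
      push_cast
      have h2 : ∀ j ∈ range (n+1), (-1:ℝ)^(j+1) * (((n+1).choose (j+1) : ℕ) : ℝ) / (x + ((j:ℝ)+1))
          = -((-1:ℝ)^j * (n.choose j) / ((x+1) + j)) + -((-1:ℝ)^j * (n.choose (j+1)) / (x + ((j:ℝ)+1))) := by
        intro j _
        rw [Nat.choose_succ_succ]
        push_cast
        have : x + 1 + (j:ℝ) = x + ((j:ℝ)+1) := by ring
        rw [this]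
        ring
      rw [Finset.sum_congr rfl h2, Finset.sum_add_distrib]
      have hBx : (∑ j ∈ range (n+1), -((-1:ℝ)^j * (n.choose (j+1)) / (x + ((j:ℝ)+1)))) = S x - 1/x := by
        rw [Finset.sum_neg_distrib, hB]
        push_cast
        ring
      rw [hBx]
      have hSx1 : (∑ j ∈ range (n+1), -((-1:ℝ)^j * (n.choose j) / (x + 1 + j))) = - S (x+1) := by
        rw [Finset.sum_neg_distrib]
      rw [hSx1]
      simp
      ring
    rw [key]
    have e1 : S x = (n.factorial : ℝ) / ∏ m ∈ range (n+1), (x + m) := ih x hx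
    have e2 : S (x+1) = (n.factorial : ℝ) / ∏ m ∈ range (n+1), ((x+1) + m) := ih (x+1) (by linarith)
    rw [e1, e2]
    have hprod2 : ∏ m ∈ range (n+1+1), (x + m) = x * ∏ m ∈ range (n+1), ((x+1) + m) := by
      rw [Finset.prod_range_succ']
      have hterm : ∀ m ∈ range (n+1), x + ((m+1 : ℕ) : ℝ) = (x+1) + (m:ℝ) := by
        intro m _; push_cast; ring
      rw [Finset.prod_congr rfl hterm]
      push_cast
      ring
    have hprod1 : ∏ m ∈ range (n+1+1), (x + m) = (∏ m ∈ range (n+1), (x + m)) * (x + ((n:ℝ)+1)) := by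
      rw [Finset.prod_range_succ]; push_cast; ring
    have h1 := hg x hx
    have h2 := hg (x+1) (by linarith)
    have hp2 : x * (∏ m ∈ range (n+1), (x+1+m)) = (∏ m ∈ range (n+1), (x + m)) * (x + ((n:ℝ)+1)) := by
      rw [← hprod2, hprod1]
    rw [hprod2, Nat.factorial_succ]
    push_cast
    rw [div_sub_div _ _ h1 h2, div_eq_div_iff (mul_ne_zero h1 h2) (mul_ne_zero (ne_of_gt hx) h2)]
    linear_combination ((n.factorial : ℝ) * ∏ m ∈ range (n+1), (x+1+(m:ℝ))) * hp2


noncomputable def Sb (T γ : ℝ) (n : ℕ) (p : ℝ[X]) : ℝ :=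
  ∑ k ∈ range n, p.coeff k * T ^ (γ + k + 1) / (γ + k + 1)

lemma Sb_ibp (T γ : ℝ) (hT : 0 < T) (n : ℕ) (p : ℝ[X]) (hdeg : p.natDegree ≤ n)
    (hk : ∀ k : ℕ, k ≤ n → p.coeff k = 0 ∨ γ + k ≠ 0)
    (hevalT : p.eval T = 0) (h0 : p.coeff 0 = 0) :
    Sb T γ n (derivative p) = -γ * Sb T (γ - 1) (n + 1) p := by
  have hsum0 : ∑ k ∈ range n, p.coeff (k+1) * T ^ (γ + k + 1) = 0 := by
    have e1 : ∀ k ∈ range n, p.coeff (k+1) * T ^ (γ + k + 1)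
        = T ^ γ * (p.coeff (k+1) * T ^ (k+1)) := by
      intro k _
      rw [show γ + (k:ℝ) + 1 = γ + ((k:ℝ)+1) by ring, rpow_add hT,
        show ((k:ℝ)+1) = ((k+1 : ℕ) : ℝ) by push_cast; ring, rpow_natCast]
      ring
    rw [Finset.sum_congr rfl e1, ← Finset.mul_sum]
    have e2 : ∑ k ∈ range n, p.coeff (k+1) * T ^ (k+1) = 0 := by
      have := Polynomial.eval_eq_sum_range' (Nat.lt_succ_of_le hdeg) T
      rw [Finset.sum_range_succ'] at this
      simp only [pow_zero, mul_one] at this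
      rw [hevalT, h0] at this
      linarith [this]
    rw [e2, mul_zero]
  unfold Sb
  rw [Finset.sum_range_succ']
  simp only [Nat.cast_zero, h0, zero_mul, zero_div, add_zero]
  rw [Finset.mul_sum, ← sub_eq_zero]
  rw [← hsum0]
  rw [← Finset.sum_sub_distrib]
  apply Finset.sum_congr rfl
  intro k hk'
  rw [Polynomial.coeff_derivative]
  rcases hk (k+1) (by simpa using Nat.succ_le_of_lt (Finset.mem_range.mp hk')) with h | h
  · simp [h]
  · have hne : γ + (k:ℝ) + 1 ≠ 0 := by push_cast at h; intro hc; apply h; linarith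
    have hexp : γ - 1 + ((k+1 : ℕ) : ℝ) + 1 = γ + (k:ℝ) + 1 := by push_cast; ring
    rw [hexp]
    field_simp
    ring


lemma iterate_derivative_dvd (a : ℝ) : ∀ (m r : ℕ) (q : ℝ[X]),
    ∃ q' : ℝ[X], derivative^[m] ((X - C a)^(r + m) * q) = (X - C a)^r * q' := by
  intro m
  induction m with
  | zero => intro r q; exact ⟨q, by simp⟩
  | succ m ih =>
    intro r q
    rw [Function.iterate_succ_apply]
    have hder : derivative ((X - C a)^(r + (m+1)) * q)
        = (X - C a)^(r + m) * ((((r+m+1 : ℕ) : ℝ[X])) * q + (X - C a) * derivative q) := by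
      have : r + (m+1) = (r + m) + 1 := rfl
      rw [this, derivative_mul, derivative_pow]
      simp only [derivative_sub, derivative_X, derivative_C, sub_zero, mul_one,
        Nat.add_sub_cancel]
      push_cast
      simp only [Polynomial.C_add, Polynomial.C_1, Polynomial.C_eq_natCast]
      push_cast
      ring
    rw [hder]
    exact ih r _

lemma natDegree_iterate_derivative_le (p : ℝ[X]) (m : ℕ) :
    (derivative^[m] p).natDegree ≤ p.natDegree := by
  induction m with
  | zero => simp
  | succ m ih =>
    rw [Function.iterate_succ_apply']
    exact le_trans ((Polynomial.natDegree_derivative_le _).trans (Nat.sub_le _ 1)) ih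

lemma coeff_zero_of_X_pow_mul (q : ℝ[X]) (r k : ℕ) (hk : k < r) :
    (X^r * q).coeff k = 0 := by
  rw [mul_comm, Polynomial.coeff_mul_X_pow']
  simp [Nat.not_le_of_lt hk]

lemma integral_rpow_polyeval (T α : ℝ) (hT : 0 < T) (hα : -(1/2:ℝ) < α) (p : ℝ[X]) (n : ℕ)
    (hdeg : p.natDegree < n) :
    ∫ t in (0:ℝ)..T, t ^ α * p.eval t = Sb T α n p := by
  have h1 : ∫ t in (0:ℝ)..T, t ^ α * p.eval t
      = ∫ t in (0:ℝ)..T, ∑ k ∈ range n, p.coeff k * t ^ (α + k) := by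
    apply intervalIntegral.integral_congr_ae
    refine Filter.Eventually.of_forall (fun t ht => ?_)
    have ht' : 0 < t := by
      rcases Set.mem_uIoc.mp ht with h | h
      · exact h.1
      · exfalso; rcases h with ⟨h1, h2⟩; linarith
    rw [Polynomial.eval_eq_sum_range' hdeg, Finset.mul_sum]
    apply Finset.sum_congr rfl
    intro k _
    rw [rpow_add ht', rpow_natCast]
    ring
  rw [h1, intervalIntegral.integral_finset_sum]
  · unfold Sb
    apply Finset.sum_congr rfl
    intro k _
    have hk1 : (-1:ℝ) < α + k := by
      have : (0:ℝ) ≤ k := Nat.cast_nonneg k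
      linarith
    rw [intervalIntegral.integral_const_mul, integral_rpow (Or.inl hk1)]
    rw [Real.zero_rpow (by intro hc; have : (0:ℝ) ≤ k := Nat.cast_nonneg k; nlinarith)]
    rw [show α + (k:ℝ) + 1 = α + k + 1 by ring]
    ring
  · intro k _
    apply IntervalIntegrable.const_mul
    apply intervalIntegral.intervalIntegrable_rpow'
    have : (0:ℝ) ≤ k := Nat.cast_nonneg k
    linarith



lemma iteratedDeriv_polyeval' (p : ℝ[X]) (n : ℕ) :
    iteratedDeriv n (fun x : ℝ => p.eval x) = fun x => (derivative^[n] p).eval x := by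
  induction n with
  | zero => simp
  | succ n ih =>
    rw [iteratedDeriv_succ, ih, Function.iterate_succ_apply']
    funext x
    exact Polynomial.deriv (p := derivative^[n] p)

lemma iterate_derivative_comp_linear (c d : ℝ) (p : ℝ[X]) (n : ℕ) :
    derivative^[n] (p.comp (C c * X + C d))
      = C (c^n) * (derivative^[n] p).comp (C c * X + C d) := by
  induction n with
  | zero => simp
  | succ n ih =>
    rw [Function.iterate_succ_apply', ih]
    rw [derivative_C_mul, derivative_comp]
    simp only [derivative_add, derivative_C_mul_X, derivative_C, add_zero]
    rw [Function.iterate_succ_apply']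
    rw [← mul_assoc, ← C_mul]
    ring_nf

lemma legendreP_eval (T : ℝ) (hT : 0 < T) (i : ℕ) (t : ℝ) :
    legendreP i (2 * t / T - 1)
      = (1 / ((Nat.factorial i : ℝ) * T^i))
        * (derivative^[i] ((X^2 - C T * X)^i)).eval t := by
  have hT' : T ≠ 0 := ne_of_gt hT
  have hfun : (fun y : ℝ => (y ^ 2 - 1) ^ i)
      = fun y => ((((X:ℝ[X])^2 - 1)^i)).eval y := by
    funext y; simp
  rw [legendreP, hfun, iteratedDeriv_polyeval']
  set ℓ : ℝ[X] := C (2/T) * X + C (-1) with hℓ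
  have hevalℓ : ℓ.eval t = 2 * t / T - 1 := by
    simp [hℓ]
    field_simp
    ring
  have hcomp : (((X:ℝ[X])^2 - 1)^i).comp ℓ = C ((4/T^2)^i) * (X^2 - C T * X)^i := by
    apply Polynomial.funext
    intro x
    simp [hℓ]
    rw [← mul_pow]
    congr 1
    field_simp
    ring
  have hkey := iterate_derivative_comp_linear (2/T) (-1) (((X:ℝ[X])^2 - 1)^i) i
  rw [hcomp] at hkey
  have hCmul : derivative^[i] (C ((4/T^2)^i) * ((X:ℝ[X])^2 - C T * X)^i)
      = C ((4/T^2)^i) * derivative^[i] (((X:ℝ[X])^2 - C T * X)^i) := by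
    induction i with
    | zero => simp
    | succ n ih => exact Polynomial.iterate_derivative_C_mul _ _ _
  rw [hCmul] at hkey
  -- evaluate hkey at t
  have hev := congrArg (fun p : ℝ[X] => p.eval t) hkey
  simp only [Polynomial.eval_mul, Polynomial.eval_C, Polynomial.eval_comp] at hev
  rw [show (C (2/T) * X + C (-1) : ℝ[X]).eval t = ℓ.eval t from rfl, hevalℓ] at hev
  have c4 : ((4:ℝ)/T^2)^i = ((2:ℝ)/T)^i * ((2:ℝ)/T)^i := by
    rw [← mul_pow]
    congr 1
    field_simp
    ring
  have h2T : ((2:ℝ)/T)^i ≠ 0 := pow_ne_zero _ (by positivity)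
  rw [c4, mul_assoc] at hev
  have hPf : (derivative^[i] (((X:ℝ[X])^2 - 1)^i)).eval (2 * t / T - 1)
      = ((2:ℝ)/T)^i * (derivative^[i] (((X:ℝ[X])^2 - C T * X)^i)).eval t := by
    have := mul_left_cancel₀ h2T hev
    linarith [this]
  simp only []
  rw [hPf]
  have hfac : ((Nat.factorial i : ℝ)) ≠ 0 := by positivity
  rw [div_pow]
  field_simp


lemma Sb_sum {ι : Type*} (T γ : ℝ) (N : ℕ) (s : Finset ι) (p : ι → ℝ[X]) :
    Sb T γ N (∑ j ∈ s, p j) = ∑ j ∈ s, Sb T γ N (p j) := by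
  unfold Sb
  have h : ∀ k ∈ range N, (∑ j ∈ s, p j).coeff k * T ^ (γ + k + 1) / (γ + k + 1)
      = ∑ j ∈ s, (p j).coeff k * T ^ (γ + k + 1) / (γ + k + 1) := by
    intro k _
    rw [Polynomial.finset_sum_coeff, Finset.sum_mul, Finset.sum_div]
  rw [Finset.sum_congr rfl h, Finset.sum_comm]

lemma Sb_monomial (T γ : ℝ) (N : ℕ) (a : ℝ) (mdeg : ℕ) (hm : mdeg < N) :
    Sb T γ N (C a * X^mdeg) = a * T^(γ + mdeg + 1)/(γ + mdeg + 1) := by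
  unfold Sb
  have hterm : ∀ k ∈ range N, (C a * X^mdeg : ℝ[X]).coeff k * T ^ (γ + k + 1) / (γ + k + 1)
      = if k = mdeg then a * T^(γ + mdeg + 1)/(γ + mdeg + 1) else 0 := by
    intro k _
    rw [Polynomial.coeff_C_mul, Polynomial.coeff_X_pow]
    by_cases h : k = mdeg
    · simp [h]
    · simp [h]
  rw [Finset.sum_congr rfl hterm, Finset.sum_ite_eq' (range N) mdeg]
  simp [Finset.mem_range.mpr hm]

lemma chain (T α : ℝ) (hT : 0 < T) (hα : -(1/2:ℝ) < α) (i : ℕ) :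
    ∀ j, j ≤ i → Sb T α (2*i+1) (derivative^[i] ((X^2 - C T * X)^i))
      = (-1:ℝ)^j * (∏ m ∈ range j, (α - m)) *
        Sb T (α - j) (2*i+1+j) (derivative^[i-j] ((X^2 - C T * X)^i)) := by
  have hT' : T ≠ 0 := ne_of_gt hT
  have hF : ((X:ℝ[X])^2 - C T * X)^i = X^i * (X - C T)^i := by
    rw [← mul_pow]; ring_nf
  intro j
  induction j with
  | zero => intro _; simp
  | succ j ih =>
    intro hj
    have hji : j ≤ i := le_of_lt (Nat.lt_of_succ_le hj)
    rw [ih hji]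
    have hm1 : i - j = (i - (j+1)) + 1 := by omega
    set m := i - (j+1) with hmdef
    have hmle : m ≤ i := by omega
    have hXdvd : ∃ q' : ℝ[X], derivative^[m] ((X^2 - C T * X)^i) = X^(j+1) * q' := by
      obtain ⟨q', hq'⟩ := iterate_derivative_dvd 0 m (j+1) ((X - C T)^i)
      refine ⟨q', ?_⟩
      have h2 : (j+1) + m = i := by omega
      rw [hF]
      rw [show (X:ℝ[X])^i = (X - C 0)^((j+1)+m) by rw [h2]; simp]
      simpa using hq'
    have hTdvd : ∃ q'' : ℝ[X], derivative^[m] ((X^2 - C T * X)^i) = (X - C T)^(j+1) * q'' := by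
      obtain ⟨q'', hq''⟩ := iterate_derivative_dvd T m (j+1) ((X:ℝ[X])^i)
      refine ⟨q'', ?_⟩
      have h2 : (j+1) + m = i := by omega
      rw [hF, mul_comm]
      rw [show ((X:ℝ[X]) - C T)^i = (X - C T)^((j+1)+m) by rw [h2]]
      exact hq''
    obtain ⟨q1, hq1⟩ := hXdvd
    obtain ⟨q2, hq2⟩ := hTdvd
    have hcoeffsmall : ∀ k, k < j + 1 → (derivative^[m] ((X^2 - C T * X)^i)).coeff k = 0 := by
      intro k hk
      rw [hq1]
      exact coeff_zero_of_X_pow_mul _ _ _ hk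
    have hstep : Sb T (α - j) (2*i+1+j) (derivative^[i-j] ((X^2 - C T * X)^i))
        = -(α - j) * Sb T (α - j - 1) (2*i+1+j+1) (derivative^[m] ((X^2 - C T * X)^i)) := by
      rw [hm1, Function.iterate_succ_apply']
      apply Sb_ibp T (α - j) hT _ _ ?_ ?_ ?_ ?_
      · apply le_trans (natDegree_iterate_derivative_le _ _)
        calc ((X^2 - C T * X : ℝ[X])^i).natDegree
            ≤ i * ((X:ℝ[X])^2 - C T * X).natDegree := natDegree_pow_le
          _ ≤ i * 2 := by
              apply Nat.mul_le_mul_left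
              apply le_trans (natDegree_sub_le _ _)
              apply max_le
              · simp [natDegree_X_pow]
              · exact le_trans (natDegree_C_mul_le _ _) (by simp [natDegree_X])
          _ ≤ 2*i+1+j := by omega
      · intro k _
        by_cases hk : k < j + 1
        · exact Or.inl (hcoeffsmall k hk)
        · right
          have hjk : (j:ℝ) + 1 ≤ (k:ℝ) := by exact_mod_cast Nat.le_of_not_lt hk
          intro hc
          nlinarith [hα]
      · rw [hq2]
        simp [Polynomial.eval_pow]
      · exact hcoeffsmall 0 (by omega)
    rw [hstep]
    have hcast : α - ((j:ℝ)+1) = α - j - 1 := by ring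
    rw [Finset.prod_range_succ, pow_succ]
    push_cast
    rw [hcast]
    rw [show 2*i+1+(j+1) = 2*i+1+j+1 by omega]
    ring

lemma Sb_f (T α : ℝ) (hT : 0 < T) (hα : -(1/2:ℝ) < α) (i : ℕ) :
    Sb T (α - i) (2*i+1+i) ((X^2 - C T * X)^i)
      = (-1:ℝ)^i * T^(α + i + 1) * (Nat.factorial i : ℝ) / ∏ m ∈ range (i+1), (α + 1 + m) := by
  have hFsum : ((X:ℝ[X])^2 - C T * X)^i
      = ∑ j ∈ range (i+1), C ((-T)^(i-j) * (i.choose j : ℝ)) * X^(i+j) := by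
    have hbase : ((X:ℝ[X])^2 - C T * X) = X * (X + C (-T)) := by
      rw [C_neg]; ring
    rw [hbase, mul_pow, add_pow, Finset.mul_sum]
    apply Finset.sum_congr rfl
    intro j hj
    rw [← C_pow, ← Polynomial.C_eq_natCast, C_mul, pow_add]
    ring
  rw [hFsum, Sb_sum]
  have hterm : ∀ j ∈ range (i+1),
      Sb T (α - i) (2*i+1+i) (C ((-T)^(i-j) * (i.choose j:ℝ)) * X^(i+j))
      = ((-1:ℝ)^i * T^(α+i+1)) * ((-1)^j * (i.choose j:ℝ) / ((α+1) + j)) := by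
    intro j hj
    have hjle : j ≤ i := Nat.lt_succ_iff.mp (Finset.mem_range.mp hj)
    rw [Sb_monomial T _ _ _ _ (by omega : i + j < 2*i+1+i)]
    have hexp : α - i + ((i+j:ℕ):ℝ) + 1 = α + j + 1 := by push_cast; ring
    rw [hexp]
    have hsgn2 : (-1:ℝ)^j * (-1:ℝ)^j = 1 := by rw [← mul_pow]; norm_num
    have hsgn : (-T:ℝ)^(i-j) = ((-1)^i * (-1)^j) * T^(i-j) := by
      rw [neg_pow]
      congr 1
      calc (-1:ℝ)^(i-j) = (-1)^(i-j) * ((-1)^j * (-1)^j) := by rw [hsgn2, mul_one]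
        _ = ((-1)^(i-j) * (-1)^j) * (-1)^j := by ring
        _ = (-1)^i * (-1)^j := by rw [← pow_add, Nat.sub_add_cancel hjle]
    rw [hsgn]
    have hTpow : (T:ℝ)^(i-j) * T^(α + j + 1) = T^(α+(i:ℝ)+1) := by
      rw [← rpow_natCast T (i-j), ← rpow_add hT, Nat.cast_sub hjle]
      congr 1; ring
    have hre : (((-1:ℝ)^i * (-1)^j) * T^(i-j) * (i.choose j:ℝ)) * T^(α+(j:ℝ)+1)/(α+(j:ℝ)+1)
        = ((-1:ℝ)^i * ((-1)^j * (i.choose j:ℝ)/((α+1)+(j:ℝ)))) * (T^(i-j) * T^(α+(j:ℝ)+1)) := by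
      rw [show α+(j:ℝ)+1 = (α+1)+(j:ℝ) by ring]
      ring
    rw [hre, hTpow]
    ring
  rw [Finset.sum_congr rfl hterm, ← Finset.mul_sum]
  rw [partial_fraction i (α+1) (by linarith)]
  ring

theorem legendre_coeff_power_explicit (T α : ℝ) (hT : 0 < T) (hα : -(1/2 : ℝ) < α) (i : ℕ) :
    ∫ t in (0:ℝ)..T, t ^ α * legendreHat T i t
      = T ^ α * Real.sqrt T * (Real.sqrt (2 * i + 1)
          * (∏ m ∈ Finset.range i, (α - m))
          / (∏ m ∈ Finset.range (i + 1), (α + 1 + m))) := by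
  have hT' : T ≠ 0 := ne_of_gt hT
  have hconst : ∀ t : ℝ, t ^ α * legendreHat T i t
      = (Real.sqrt ((2 * i + 1) / T) * (1 / ((Nat.factorial i : ℝ) * T^i)))
        * (t ^ α * (derivative^[i] ((X^2 - C T * X)^i)).eval t) := by
    intro t
    rw [legendreHat, legendreP_eval T hT]
    ring
  rw [intervalIntegral.integral_congr (fun t _ => hconst t)]
  rw [intervalIntegral.integral_const_mul]
  rw [integral_rpow_polyeval T α hT hα _ (2*i+1) ?hdeg]
  case hdeg =>
    apply Nat.lt_succ_of_le
    apply le_trans (natDegree_iterate_derivative_le _ _)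
    calc ((X^2 - C T * X : ℝ[X])^i).natDegree
        ≤ i * ((X:ℝ[X])^2 - C T * X).natDegree := natDegree_pow_le
      _ ≤ i * 2 := by
          apply Nat.mul_le_mul_left
          apply le_trans (natDegree_sub_le _ _)
          apply max_le
          · simp [natDegree_X_pow]
          · exact le_trans (natDegree_C_mul_le _ _) (by simp [natDegree_X])
      _ ≤ 2*i := by omega
  rw [chain T α hT hα i i (le_refl i)]
  rw [Nat.sub_self, Function.iterate_zero_apply]
  rw [Sb_f T α hT hα i]
  -- now pure real arithmetic
  have hsq : Real.sqrt ((2 * i + 1) / T) = Real.sqrt (2 * i + 1) / Real.sqrt T := by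
    apply Real.sqrt_div (by positivity)
  have hsgn : (-1:ℝ)^i * (-1)^i = 1 := by rw [← mul_pow]; norm_num
  have hTpow : T ^ (α + (i:ℝ) + 1) = T ^ α * T^(i:ℕ) * T := by
    rw [rpow_add hT, rpow_add hT, rpow_natCast, rpow_one]
  have hprodne : (∏ m ∈ Finset.range (i+1), (α + 1 + (m:ℝ))) ≠ 0 := by
    apply ne_of_gt
    apply Finset.prod_pos
    intro k _
    have : (0:ℝ) ≤ k := Nat.cast_nonneg k
    nlinarith [hα]
  have hfacne : ((Nat.factorial i : ℝ)) ≠ 0 := by positivity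
  have hTine : (T:ℝ)^(i:ℕ) ≠ 0 := pow_ne_zero _ hT'
  have hsqTne : Real.sqrt T ≠ 0 := by positivity
  have hss : Real.sqrt T * Real.sqrt T = T := Real.mul_self_sqrt hT.le
  rw [hsq, hTpow]
  field_simp
  linear_combination ((∏ m ∈ Finset.range i, (α - (m:ℝ))) * T) * hsgn - (∏ m ∈ Finset.range i, (α - (m:ℝ))) * hss
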